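/- Let z : Ω̃(E) → ℤ be a finitely supported function with Σ_v z(v) = 0, and define f_z : V*∖{0} → E^× by f_z(ℓ) = Π_v ℓ_E(v)^{z(v)} (a finite product of nonzero elements of E, with integer exponents). Then: (1) f_z(c·ℓ) = f_z(ℓ) for every c ∈ F^× and every nonzero ℓ ∈ V*, so f_z descends to the projective space ℙ(V*)(F); (2) if z' is obtained from z by replacing each v in the support by e_v·v with e_v ∈ E^× (i.e., z'(e_v·v) = z(v)), then there is a constant C ∈ E^×, independent of ℓ, with f_{z'}(ℓ) = C·f_z(ℓ) for all nonzero ℓ ∈ V*; (3) for g ∈ GL(V), letting g·z denote the pushforward of z along v ↦ (g⊗1)v, one has f_{g·z}(ℓ) = f_z(ℓ∘g) for all nonzero ℓ ∈ V*. Consequently z ↦ (class of f_z) is a well-defined GL(V)-equivariant homomorphism Ψ⁰ from degree-zero cycles on Ω̃(E) modulo rescaling of lifts to the group of functions ℙ(V*)(F) → E^× modulo constants. -/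

import Mathlib

open TensorProduct

variable (F : Type*) [Field F] (E : Type*) [Field E] [Algebra F E]
  (V : Type*) [AddCommGroup V] [Module F V]

/-- The base change `ℓ_E : V ⊗_F E → E` of a linear functional `ℓ : V → F` (with the base
change realized as `E ⊗[F] V`). -/
noncomputable def dualBC (l : V →ₗ[F] F) : E ⊗[F] V →ₗ[F] E :=
  (TensorProduct.rid F E).toLinearMap ∘ₗ TensorProduct.map LinearMap.id l

/-- The action of an `F`-linear automorphism `g` of `V` on the base change `V ⊗_F E`,
i.e. `g ⊗ 1`. -/
noncomputable def tensAct (g : V ≃ₗ[F] V) : E ⊗[F] V →ₗ[F] E ⊗[F] V :=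
  TensorProduct.map LinearMap.id (g : V →ₗ[F] V)

/-- The lifts of `E`-points of Drinfeld's upper half space: vectors `v ∈ V ⊗_F E` with
`ℓ_E(v) ≠ 0` for every nonzero functional `ℓ ∈ V*`. -/
def OmegaLifts : Set (E ⊗[F] V) :=
  {v | ∀ l : V →ₗ[F] F, l ≠ 0 → dualBC F E V l v ≠ 0}

/-- The function `Φ_v : GL(V) → E`, `g ↦ ℓ₀,E((g⁻¹ ⊗ 1)v) / ℓ₀,E(v)`. -/
noncomputable def PhiFun (l₀ : V →ₗ[F] F) (v : E ⊗[F] V) (g : V ≃ₗ[F] V) : E :=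
  dualBC F E V l₀ (tensAct F E V g⁻¹ v) / dualBC F E V l₀ v

/-- The multiplicative cocycle `f_z(ℓ) = ∏_v ℓ_E(v)^{z(v)}` attached to a finitely
supported `ℤ`-valued cycle `z` on `V ⊗_F E`. -/
noncomputable def cycleFun (z : (E ⊗[F] V) →₀ ℤ) (l : V →ₗ[F] F) : E :=
  z.prod fun v k => dualBC F E V l v ^ k

section Aux

variable {F : Type*} [Field F] {E : Type*} [Field E] [Algebra F E]
  {V : Type*} [AddCommGroup V] [Module F V]

lemma dualBC_tmul (l : V →ₗ[F] F) (x : E) (y : V) :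
    dualBC F E V l (x ⊗ₜ[F] y) = algebraMap F E (l y) * x := by
  simp [dualBC, Algebra.smul_def]

lemma dualBC_smul_left (l : V →ₗ[F] F) (c : F) (v : E ⊗[F] V) :
    dualBC F E V (c • l) v = algebraMap F E c * dualBC F E V l v := by
  induction v using TensorProduct.induction_on with
  | zero => simp
  | tmul x y => simp [dualBC_tmul, map_mul]; ring
  | add a b ha hb => simp [map_add, ha, hb, mul_add]

lemma dualBC_smul_right (l : V →ₗ[F] F) (e : E) (v : E ⊗[F] V) :
    dualBC F E V l (e • v) = e * dualBC F E V l v := by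
  induction v using TensorProduct.induction_on with
  | zero => simp
  | tmul x y => rw [TensorProduct.smul_tmul']; simp [dualBC_tmul]; ring
  | add a b ha hb => simp [smul_add, map_add, ha, hb, mul_add]

lemma dualBC_tensAct (g : V ≃ₗ[F] V) (l : V →ₗ[F] F) (v : E ⊗[F] V) :
    dualBC F E V l (tensAct F E V g v) = dualBC F E V (l ∘ₗ (g : V →ₗ[F] V)) v := by
  induction v using TensorProduct.induction_on with
  | zero => simp
  | tmul x y => simp [tensAct, dualBC_tmul]
  | add a b ha hb => simp [map_add, ha, hb]

lemma prod_zpow_eq_zpow_sum {ι G : Type*} [CommGroup G] (s : Finset ι) (f : ι → ℤ) (a : G) :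
    ∏ i ∈ s, a ^ f i = a ^ ∑ i ∈ s, f i := by
  classical
  induction s using Finset.induction with
  | empty => simp
  | insert _ _ h ih => rw [Finset.prod_insert h, Finset.sum_insert h, ih, zpow_add]

/-- Key lemma: pushing forward a cycle along `f` and taking the product, assuming the
values `φ (f v)` are nonzero on the support. -/
lemma prod_mapDomain_zpow {α β : Type*} (f : α → β) (z : α →₀ ℤ) (φ : β → E)
    (hφ : ∀ v ∈ z.support, φ (f v) ≠ 0) :
    (Finsupp.mapDomain f z).prod (fun b k => φ b ^ k)
      = z.prod (fun v k => φ (f v) ^ k) := by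
  classical
  set ψ : β → Eˣ := fun b => if h : φ b = 0 then 1 else Units.mk0 (φ b) h with hψ
  have key : (Finsupp.mapDomain f z).prod (fun b k => ψ b ^ k)
      = z.prod (fun v k => ψ (f v) ^ k) :=
    Finsupp.prod_mapDomain_index (fun b => zpow_zero _) (fun b m n => zpow_add _ m n)
  have hcoe : ∀ b : β, φ b ≠ 0 → ((ψ b : E)) = φ b := by
    intro b hb; simp [hψ, hb]
  have h1 : (Finsupp.mapDomain f z).prod (fun b k => φ b ^ k)
      = (((Finsupp.mapDomain f z).prod (fun b k => ψ b ^ k) : Eˣ) : E) := by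
    rw [Finsupp.prod, Finsupp.prod, Units.coe_prod _ _]
    refine Finset.prod_congr rfl fun b hb => ?_
    have hb' : φ b ≠ 0 := by
      have := Finsupp.mapDomain_support hb
      obtain ⟨v, hv, rfl⟩ := Finset.mem_image.mp this
      exact hφ v hv
    rw [Units.val_zpow_eq_zpow_val, hcoe b hb']
  have h2 : z.prod (fun v k => φ (f v) ^ k)
      = ((z.prod (fun v k => ψ (f v) ^ k) : Eˣ) : E) := by
    rw [Finsupp.prod, Finsupp.prod, Units.coe_prod _ _]
    refine Finset.prod_congr rfl fun v hv => ?_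
    rw [Units.val_zpow_eq_zpow_val, hcoe _ (hφ v hv)]
  rw [h1, h2, key]

end Aux

/-- For a degree-zero cycle `z` supported on lifts of `E`-points of
Drinfeld's upper half space: the values `f_z(ℓ)` are nonzero; (1) `f_z` is invariant under
`F^×`-rescaling of `ℓ`, so descends to `ℙ(V*)(F)`; (2) rescaling the lifts in the support
changes `f_z` by a constant in `E^×`; (3) `f_{g·z}(ℓ) = f_z(ℓ∘g)`; so that
`z ↦ (class of f_z)` is a well-defined `GL(V)`-equivariant homomorphism `Ψ⁰`. -/
theorem cycleFun_well_defined_and_equivariant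
    {F : Type*} [Field F] {E : Type*} [Field E] [Algebra F E]
    {V : Type*} [AddCommGroup V] [Module F V] [FiniteDimensional F V]
    (hdim : 2 ≤ Module.finrank F V)
    (z : (E ⊗[F] V) →₀ ℤ)
    (hsupp : ∀ v ∈ z.support, v ∈ OmegaLifts F E V)
    (hdeg : (z.sum fun _ k => k) = 0) :
    (∀ l : V →ₗ[F] F, l ≠ 0 → cycleFun F E V z l ≠ 0) ∧
    (∀ c : F, c ≠ 0 → ∀ l : V →ₗ[F] F, l ≠ 0 →
      cycleFun F E V z (c • l) = cycleFun F E V z l) ∧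
    (∀ e : (E ⊗[F] V) → Eˣ, ∃ C : E, C ≠ 0 ∧ ∀ l : V →ₗ[F] F, l ≠ 0 →
      cycleFun F E V (Finsupp.mapDomain (fun v => (e v : E) • v) z) l
        = C * cycleFun F E V z l) ∧
    (∀ g : V ≃ₗ[F] V, ∀ l : V →ₗ[F] F, l ≠ 0 →
      cycleFun F E V (Finsupp.mapDomain (tensAct F E V g) z) l
        = cycleFun F E V z (l ∘ₗ (g : V →ₗ[F] V))) := by
  classical
  have hfact : ∀ l : V →ₗ[F] F, l ≠ 0 → ∀ v ∈ z.support, dualBC F E V l v ≠ 0 :=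
    fun l hl v hv => hsupp v hv l hl
  refine ⟨?_, ?_, ?_, ?_⟩
  · intro l hl
    rw [cycleFun, Finsupp.prod]
    exact Finset.prod_ne_zero_iff.mpr fun v hv => zpow_ne_zero _ (hfact l hl v hv)
  · intro c hc l hl
    have ha : (algebraMap F E c) ≠ 0 := by
      simpa using (map_ne_zero (algebraMap F E)).mpr hc
    have : (∏ v ∈ z.support, algebraMap F E c ^ z v) = 1 := by
      have := prod_zpow_eq_zpow_sum z.support (fun v => z v) (Units.mk0 _ ha)
      have h2 : (∑ v ∈ z.support, z v) = 0 := hdeg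
      rw [h2, zpow_zero] at this
      calc (∏ v ∈ z.support, algebraMap F E c ^ z v)
          = (((∏ v ∈ z.support, (Units.mk0 _ ha) ^ z v : Eˣ)) : E) := by
            rw [Units.coe_prod _ _]
            exact Finset.prod_congr rfl fun v hv => by simp
        _ = 1 := by rw [this]; rfl
    rw [cycleFun, cycleFun]
    simp_rw [dualBC_smul_left, mul_zpow]
    rw [Finsupp.prod, Finset.prod_mul_distrib, this, one_mul, Finsupp.prod]
  · intro e
    refine ⟨z.prod fun v k => (e v : E) ^ k, ?_, ?_⟩
    · rw [Finsupp.prod]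
      exact Finset.prod_ne_zero_iff.mpr fun v hv => zpow_ne_zero _ (Units.ne_zero _)
    · intro l hl
      rw [cycleFun, cycleFun,
        prod_mapDomain_zpow (fun v => (e v : E) • v) z (dualBC F E V l)
          (fun v hv => by
            rw [dualBC_smul_right]
            exact mul_ne_zero (Units.ne_zero _) (hfact l hl v hv))]
      simp_rw [dualBC_smul_right, mul_zpow]
      rw [Finsupp.prod, Finset.prod_mul_distrib, ← Finsupp.prod, ← Finsupp.prod]
  · intro g l hl
    have hlg : l ∘ₗ (g : V →ₗ[F] V) ≠ 0 := by
      intro h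
      apply hl
      ext x
      have := LinearMap.congr_fun h (g.symm x)
      simpa using this
    rw [cycleFun, cycleFun,
      prod_mapDomain_zpow (tensAct F E V g) z (dualBC F E V l)
        (fun v hv => by rw [dualBC_tensAct]; exact hfact _ hlg v hv)]
    simp_rw [dualBC_tensAct]
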